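/- Proposition C.1 (continuity of θ̃): define θ̃ : ℝ → ℝ by θ̃(s) = −1 if s is irrational, and for rational s with reduced fraction s = q/p (p ≥ 1, gcd(|q|, p) = 1): θ̃(s) = −1 if p is even and θ̃(s) = −cos(π/p) if p is odd. Then for every s₀ ∈ (0, 1/2): θ̃ is continuous at s₀ if s₀ is irrational or s₀ is rational with even reduced denominator, and θ̃ is discontinuous at s₀ if s₀ is rational with odd reduced denominator. (Note θ̃(q/p) = min_{k∈ℤ} cos(2πkq/p).) -/

import Mathlib

open Classical in
/-- The function `θ̃` of Appendix C: `θ̃(s) = -1` for irrational `s`, while for rational `s`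
with reduced denominator `p`, `θ̃(s) = -1` if `p` is even and `-cos(π/p)` if `p` is odd. -/
noncomputable def thetaT (s : ℝ) : ℝ :=
  if h : ∃ r : ℚ, (r : ℝ) = s then
    (if Even h.choose.den then -1 else -Real.cos (Real.pi / (h.choose.den : ℝ)))
  else -1

lemma thetaT_irr {s : ℝ} (hs : ¬ ∃ r : ℚ, (r : ℝ) = s) : thetaT s = -1 := by
  simp only [thetaT]
  rw [dif_neg hs]

lemma thetaT_rat (r : ℚ) :
    thetaT (r : ℝ) = if Even r.den then -1 else -Real.cos (Real.pi / (r.den : ℝ)) := by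
  have h : ∃ q : ℚ, (q : ℝ) = (r : ℝ) := ⟨r, rfl⟩
  have hc : h.choose = r := Rat.cast_injective h.choose_spec
  simp only [thetaT]
  rw [dif_pos h, hc]

lemma finite_den_le (N : ℕ) (c : ℝ) :
    {r : ℚ | r.den ≤ N ∧ |(r : ℝ) - c| ≤ 1}.Finite := by
  obtain ⟨M, hM⟩ := exists_nat_gt ((|c| + 1) * N)
  set s := {r : ℚ | r.den ≤ N ∧ |(r : ℝ) - c| ≤ 1}
  have hinj : Function.Injective (fun q : ℚ => (q.num, q.den)) := by
    intro a b hab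
    simp only [Prod.mk.injEq] at hab
    rw [← Rat.num_div_den a, ← Rat.num_div_den b, hab.1, hab.2]
  have H : (fun q : ℚ => (q.num, q.den)) '' s ⊆
      Set.Icc (-(M : ℤ)) M ×ˢ Set.Iic N := by
    rintro ⟨n, d⟩ ⟨q, ⟨hd, hc1⟩, hq⟩
    obtain ⟨rfl, rfl⟩ : q.num = n ∧ q.den = d := by
      simpa [Prod.ext_iff] using hq
    refine ⟨?_, hd⟩
    have hq0 : (0 : ℝ) < (q.den : ℝ) := by positivity
    have hnum : (q.num : ℝ) = (q : ℝ) * (q.den : ℝ) := by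
      rw [Rat.cast_def]; field_simp
    have habs : |(q : ℝ)| ≤ |c| + 1 := by
      have := abs_sub_abs_le_abs_sub (q : ℝ) c
      linarith
    have hbound : |(q.num : ℝ)| ≤ (|c| + 1) * N := by
      rw [hnum, abs_mul, abs_of_pos hq0]
      have h1 : (q.den : ℝ) ≤ N := by exact_mod_cast hd
      have h2 : (0 : ℝ) ≤ |c| + 1 := by positivity
      exact mul_le_mul habs h1 hq0.le h2
    have hMi : |q.num| ≤ (M : ℤ) := by exact_mod_cast hbound.trans hM.le
    exact Set.mem_Icc.mpr (abs_le.mp hMi)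
  exact Set.Finite.of_finite_image
    (Set.Finite.subset (((Set.finite_Icc _ _).prod (Set.finite_Iic _))) H) hinj.injOn

lemma continuousAt_of_eq_neg_one {s₀ : ℝ} (hv : thetaT s₀ = -1) : ContinuousAt thetaT s₀ := by
  rw [Metric.continuousAt_iff]
  intro ε hε
  obtain ⟨N, hN⟩ := exists_nat_gt (Real.pi ^ 2 / (2 * ε))
  have hNpos : (0 : ℝ) < N := lt_of_le_of_lt (by positivity) hN
  have key : ∀ p : ℕ, N < p → dist (-Real.cos (Real.pi / p)) (-1) < ε := by
    intro p hp
    have hp0 : (0 : ℝ) < p := hNpos.trans (by exact_mod_cast hp)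
    have hpn : 0 < p := Nat.lt_of_le_of_lt (Nat.zero_le N) hp
    have hp1 : (1 : ℝ) ≤ p := Nat.one_le_cast.mpr hpn
    have hb := Real.one_sub_sq_div_two_le_cos (x := Real.pi / p)
    have hd : dist (-Real.cos (Real.pi / p)) (-1) = 1 - Real.cos (Real.pi / p) := by
      rw [Real.dist_eq, abs_of_nonneg (by linarith [Real.cos_le_one (Real.pi / p)])]
      ring
    rw [hd]
    have h1 : 1 - Real.cos (Real.pi / p) ≤ Real.pi ^ 2 / (2 * (p : ℝ) ^ 2) := by
      have : (Real.pi / p) ^ 2 / 2 = Real.pi ^ 2 / (2 * (p : ℝ) ^ 2) := by ring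
      linarith [this ▸ hb]
    have h2 : Real.pi ^ 2 / (2 * (p : ℝ) ^ 2) ≤ Real.pi ^ 2 / (2 * (p : ℝ)) := by
      apply div_le_div_of_nonneg_left (by positivity) (by positivity)
      nlinarith
    have h3 : Real.pi ^ 2 / (2 * (p : ℝ)) < ε := by
      rw [div_lt_iff₀ (by positivity)]
      have hNp : Real.pi ^ 2 / (2 * ε) < (p : ℝ) := hN.trans (by exact_mod_cast hp)
      rw [div_lt_iff₀ (by positivity)] at hNp
      nlinarith
    linarith
  set T : Set ℝ := ((↑) '' {r : ℚ | r.den ≤ N ∧ |(r : ℝ) - s₀| ≤ 1}) \ {s₀} with hTdef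
  have hT : T.Finite := ((finite_den_le N s₀).image _).diff
  have hs₀T : s₀ ∈ Tᶜ := fun h => h.2 rfl
  obtain ⟨δ, hδ, hball⟩ := Metric.isOpen_iff.mp hT.isClosed.isOpen_compl s₀ hs₀T
  refine ⟨min δ 1, lt_min hδ one_pos, fun {x} hx => ?_⟩
  have hxδ : dist x s₀ < δ := lt_of_lt_of_le hx (min_le_left _ _)
  have hx1 : dist x s₀ < 1 := lt_of_lt_of_le hx (min_le_right _ _)
  rw [hv]
  by_cases hxe : x = s₀
  · rw [hxe, hv]; simpa using hε
  by_cases hxr : ∃ r : ℚ, (r : ℝ) = x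
  · obtain ⟨r, rfl⟩ := hxr
    have hden : N < r.den := by
      by_contra hle
      push_neg at hle
      have : (r : ℝ) ∈ T := ⟨⟨r, ⟨hle, by rw [← Real.dist_eq]; exact hx1.le⟩, rfl⟩, hxe⟩
      exact (hball hxδ) this
    rw [thetaT_rat]
    by_cases he : Even r.den
    · rw [if_pos he]; simpa using hε
    · rw [if_neg he]; exact key r.den hden
  · rw [thetaT_irr hxr]; simpa using hε

/-- Proposition C.1: on `(0, 1/2)`, `θ̃` is continuous at irrationals and at rationals with
even reduced denominator, and discontinuous at rationals with odd reduced denominator. -/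
theorem stmt18 (s₀ : ℝ) (h₀ : s₀ ∈ Set.Ioo (0 : ℝ) (1/2)) :
    ((Irrational s₀ ∨ ∃ r : ℚ, (r : ℝ) = s₀ ∧ Even r.den) → ContinuousAt thetaT s₀) ∧
      ((∃ r : ℚ, (r : ℝ) = s₀ ∧ Odd r.den) → ¬ ContinuousAt thetaT s₀) := by
  obtain ⟨h₀l, h₀r⟩ := h₀
  constructor
  · rintro (hirr | ⟨r, hr, heven⟩)
    · exact continuousAt_of_eq_neg_one (thetaT_irr (fun ⟨q, hq⟩ => hirr ⟨q, hq⟩))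
    · apply continuousAt_of_eq_neg_one
      rw [← hr, thetaT_rat, if_pos heven]
  · rintro ⟨r, hr, hodd⟩ hcont
    have hden1 : r.den ≠ 1 := by
      intro h1
      have hz : (r : ℝ) = (r.num : ℝ) := by
        rw [Rat.cast_def, h1]; simp
      rw [hr] at hz
      have h0 : (0 : ℝ) < (r.num : ℝ) := hz ▸ h₀l
      have h0' : (0 : ℤ) < r.num := by exact_mod_cast h0
      have : (1 : ℝ) ≤ (r.num : ℝ) := by exact_mod_cast h0'
      rw [← hz] at this
      linarith
    have h3 : 3 ≤ r.den := by
      have ho := Nat.odd_iff.mp hodd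
      have hnz := r.den_nz
      omega
    have hval : thetaT s₀ = -Real.cos (Real.pi / (r.den : ℝ)) := by
      rw [← hr, thetaT_rat, if_neg (Nat.not_even_iff_odd.mpr hodd)]
    have hd0 : (0 : ℝ) < (r.den : ℝ) := by positivity
    have hcos : Real.cos (Real.pi / (r.den : ℝ)) < 1 := by
      have h1 : (0 : ℝ) < Real.pi / (r.den : ℝ) := by positivity
      have h2 : Real.pi / (r.den : ℝ) ≤ Real.pi := by
        rw [div_le_iff₀ hd0]
        have hd3 : (3 : ℝ) ≤ (r.den : ℝ) := by exact_mod_cast h3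
        nlinarith [Real.pi_pos]
      have := Real.cos_lt_cos_of_nonneg_of_le_pi (le_refl 0) h2 h1
      rwa [Real.cos_zero] at this
    set v := -Real.cos (Real.pi / (r.den : ℝ)) with hvdef
    have hv1 : -1 < v := by simp only [hvdef]; linarith
    obtain ⟨δ, hδ, hb⟩ := Metric.continuousAt_iff.mp hcont (v + 1) (by linarith)
    obtain ⟨x, hxirr, hxball⟩ :=
      dense_irrational.exists_mem_open Metric.isOpen_ball ⟨s₀, Metric.mem_ball_self hδ⟩
    have hdist := hb (Metric.mem_ball.mp hxball)
    rw [hval, thetaT_irr (fun ⟨q, hq⟩ => hxirr ⟨q, hq⟩)] at hdist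
    rw [Real.dist_eq, abs_of_nonpos (by linarith)] at hdist
    linarith
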